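/- arXiv:1804.04787 — 2 statements merged into one kernel-verified Lean document; each statement's English description precedes it below -/
import Mathlib

section
/- For every positive integer n, the chromatic number of the tournament D_n equals n. -/
/-- A tournament: a finite vertex type with an orientation of each pair of
distinct vertices. -/
structure Tournament : Type 1 where
  V : Type
  [fintypeV : Fintype V]
  adj : V → V → Prop
  irrefl : ∀ v, ¬ adj v v
  total : ∀ u v, u ≠ v → adj u v ∨ adj v u
  asymm : ∀ u v, adj u v → ¬ adj v u

attribute [instance] Tournament.fintypeV

namespace Tournament

/-- A set of vertices is transitive: the induced subtournament has no directed
cycle (equivalently, the adjacency relation is transitive on it). -/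
def IsTransSet (T : Tournament) (S : Set T.V) : Prop :=
  ∀ a ∈ S, ∀ b ∈ S, ∀ c ∈ S, T.adj a b → T.adj b c → T.adj a c

/-- The chromatic number of a tournament: least number of transitive sets
partitioning the vertex set. -/
noncomputable def chromNum (T : Tournament) : ℕ :=
  sInf {k | ∃ c : T.V → Fin k, ∀ i, T.IsTransSet {v | c v = i}}

/-- `T.Contains S`: `S` is isomorphic to a subtournament of `T`. -/
def Contains (T S : Tournament) : Prop :=
  ∃ f : S.V → T.V, Function.Injective f ∧ ∀ u v, S.adj u v ↔ T.adj (f u) (f v)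

/-- `T.Iso S`: `T` and `S` are isomorphic tournaments. -/
def Iso (T S : Tournament) : Prop :=
  ∃ f : S.V → T.V, Function.Bijective f ∧ ∀ u v, S.adj u v ↔ T.adj (f u) (f v)

/-- A set of tournaments is heroic if excluding all its members bounds the
chromatic number. -/
def Heroic (H : Set Tournament) : Prop :=
  ∃ c, ∀ T : Tournament, (∀ X ∈ H, ¬ T.Contains X) → T.chromNum ≤ c

/-- A tournament is a hero if `{H}` is heroic. -/
def IsHero (H : Tournament) : Prop :=
  ∃ c, ∀ T : Tournament, ¬ T.Contains H → T.chromNum ≤ c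

/-- A class of tournaments is hereditary if closed under subtournaments up to
isomorphism. -/
def Hereditary (C : Set Tournament) : Prop :=
  ∀ T ∈ C, ∀ S : Tournament, T.Contains S → S ∈ C

def StronglyConnected (T : Tournament) : Prop :=
  ∀ u v : T.V, Relation.ReflTransGen T.adj u v

/-- A transitive tournament (no directed cycle). -/
def IsTransTour (T : Tournament) : Prop :=
  ∀ a b c : T.V, T.adj a b → T.adj b c → T.adj a c

/-- Direction rule for Δ-partitions with 0-based part-indices (a part is at an
odd position in the 1-based sense iff its 0-based index is even).
`deltaDir i j` holds iff part `i` is complete to part `j`: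
for `i < j`, part `j` beats part `i` iff both positions are (1-based) odd. -/
def deltaDir {m : ℕ} (i j : Fin m) : Prop :=
  (i < j ∧ ¬ (Even i.1 ∧ Even j.1)) ∨ (j < i ∧ (Even i.1 ∧ Even j.1))

theorem deltaDir_irrefl {m : ℕ} (i : Fin m) : ¬ deltaDir i i := by
  rintro (⟨h, _⟩ | ⟨h, _⟩) <;> exact lt_irrefl _ h

theorem deltaDir_total {m : ℕ} {i j : Fin m} (h : i ≠ j) : deltaDir i j ∨ deltaDir j i := by
  rcases lt_or_gt_of_ne h with hl | hl
  · by_cases he : Even i.1 ∧ Even j.1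
    · exact Or.inr (Or.inr ⟨hl, he.2, he.1⟩)
    · exact Or.inl (Or.inl ⟨hl, he⟩)
  · by_cases he : Even i.1 ∧ Even j.1
    · exact Or.inl (Or.inr ⟨hl, he⟩)
    · exact Or.inr (Or.inl ⟨hl, fun hc => he ⟨hc.2, hc.1⟩⟩)

theorem deltaDir_asymm {m : ℕ} {i j : Fin m} (h : deltaDir i j) : ¬ deltaDir j i := by
  rcases h with ⟨h1, h2⟩ | ⟨h1, h2⟩ <;> rintro (⟨g1, g2⟩ | ⟨g1, g2⟩)
  · exact lt_asymm h1 g1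
  · exact h2 ⟨g2.2, g2.1⟩
  · exact g2 ⟨h2.2, h2.1⟩
  · exact lt_asymm h1 g1

/-- The tournament `Δ(F 0, F 1, …, F (m-1))` given by a Δ-partition rule:
within a part use the part's edges; between parts, edges follow `deltaDir`.
For `m = 3` this is the trisection `Δ(A,B,C)` (`X ⇒ Y`, `Y ⇒ Z`, `Z ⇒ X`),
and for `m = 2` it is `F 0 ⇒ F 1`. -/
def deltaSum {m : ℕ} (F : Fin m → Tournament) : Tournament where
  V := (i : Fin m) × (F i).V
  adj x y := deltaDir x.1 y.1 ∨
    ∃ (i : Fin m) (u v : (F i).V), (F i).adj u v ∧ x = ⟨i, u⟩ ∧ y = ⟨i, v⟩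
  irrefl := by
    rintro x (h | ⟨i, u, v, hadj, rfl, h2⟩)
    · exact deltaDir_irrefl _ h
    · injection h2 with h h'
      subst h'
      exact (F i).irrefl u hadj
  total := by
    rintro ⟨i, a⟩ ⟨j, b⟩ hne
    by_cases hij : i = j
    · subst hij
      have hab : a ≠ b := fun h => hne (by rw [h])
      rcases (F i).total a b hab with h | h
      · exact Or.inl (Or.inr ⟨i, a, b, h, rfl, rfl⟩)
      · exact Or.inr (Or.inr ⟨i, b, a, h, rfl, rfl⟩)
    · rcases deltaDir_total hij with h | h
      · exact Or.inl (Or.inl h)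
      · exact Or.inr (Or.inl h)
  asymm := by
    rintro x y hxy hyx
    rcases hxy with h | ⟨i, u, v, hadj, rfl, rfl⟩
    · rcases hyx with g | ⟨j, p, q, gadj, rfl, rfl⟩
      · exact deltaDir_asymm h g
      · exact deltaDir_irrefl _ h
    · rcases hyx with g | ⟨j, p, q, gadj, h1, h2⟩
      · exact deltaDir_irrefl _ g
      · injection h1 with hij hp
        subst hij
        obtain rfl := eq_of_heq hp
        injection h2 with h h'
        subst h'
        exact (F i).asymm u v hadj gadj

/-- The one-vertex tournament `I`. -/
def oneTour : Tournament where
  V := Unit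
  adj _ _ := False
  irrefl := fun _ h => h
  total := fun u v h => (h (Subsingleton.elim u v)).elim
  asymm := fun _ _ h => h.elim

/-- The transitive tournament `L k` on `k` vertices. -/
def linTour (k : ℕ) : Tournament where
  V := Fin k
  adj i j := i < j
  irrefl := fun v => lt_irrefl v
  total := fun _ _ h => lt_or_gt_of_ne h
  asymm := fun _ _ h => lt_asymm h

/-- `Dtour n` is the tournament `D_n`: `D_1 = I`, `D_n = Δ(I, D_{n-1}, D_{n-1})`. -/
def Dtour : ℕ → Tournament
  | 0 => oneTour
  | 1 => oneTour
  | n + 2 => deltaSum ![oneTour, Dtour (n + 1), Dtour (n + 1)]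

/-- `Atour n` is the tournament `A_n`: `A_1 = I`, and `A_n` is a Δ-sum with
`2n-1` parts, the (1-based) odd positions being single vertices and the even
positions copies of `A_{n-1}`. -/
def Atour : ℕ → Tournament
  | 0 => oneTour
  | 1 => oneTour
  | n + 2 =>
      deltaSum fun t : Fin (2 * (n + 2) - 1) => if Even t.1 then oneTour else Atour (n + 1)

/-- `Utour n` is the tournament `U_n = Δ(I, I, …, I)` with `2n-1` one-vertex parts. -/
def Utour (n : ℕ) : Tournament :=
  deltaSum fun _ : Fin (2 * n - 1) => oneTour

/-- `𝒟`: the closure of `{D_n : n ≥ 1}` under subtournaments up to isomorphism. -/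
def classD : Set Tournament :=
  {T | ∃ n : ℕ, 1 ≤ n ∧ (Dtour n).Contains T}

/-- `𝒜`: the closure of `{A_n : n ≥ 1}` under subtournaments up to isomorphism. -/
def classA : Set Tournament :=
  {T | ∃ n : ℕ, 1 ≤ n ∧ (Atour n).Contains T}

/-- `Δ₂ = Δ(L₂, L₂, L₂)`. -/
def delta2 : Tournament :=
  deltaSum ![linTour 2, linTour 2, linTour 2]

/-- The tournament `N`. -/
def Ntour : Tournament where
  V := Fin 5
  adj i j :=
    ![![false, true, false, true, false],
      ![false, false, true, true, true],
      ![true, false, false, true, true],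
      ![false, false, false, false, true],
      ![true, false, false, false, false]] i j = true
  irrefl := by decide
  total := by decide
  asymm := by decide

/-- The tournament `S₃`: `v_i → v_j` iff `j - i ∈ {1, 2} (mod 5)`. -/
def Stour3 : Tournament where
  V := Fin 5
  adj i j := (j.1 + 5 - i.1) % 5 = 1 ∨ (j.1 + 5 - i.1) % 5 = 2
  irrefl := by decide
  total := by decide
  asymm := by decide

/-- A vertex `v` outside `S` is mixed on `S` if it has both an out-neighbor and
an in-neighbor in `S`. -/
def MixedOn (T : Tournament) (v : T.V) (S : Set T.V) : Prop :=
  (∃ s ∈ S, T.adj v s) ∧ (∃ s ∈ S, T.adj s v)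

/-- A homogeneous set: `1 < |S| < |V(T)|` and no vertex outside `S` is mixed on `S`. -/
def Homog (T : Tournament) (S : Set T.V) : Prop :=
  1 < S.ncard ∧ S.ncard < Nat.card T.V ∧ ∀ v ∉ S, ¬ T.MixedOn v S

/-- A prime tournament has no homogeneous set. -/
def Prime (T : Tournament) : Prop := ¬ ∃ S : Set T.V, T.Homog S

/-- `P` is a Δ-partition of `T` with parts `P 0, …, P (m-1)`:
the parts are nonempty, partition `V(T)`, and all edges between distinct parts
follow the rule `deltaDir`. -/
def IsDeltaPartition (T : Tournament) {m : ℕ} (P : Fin m → Set T.V) : Prop :=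
  (∀ i, (P i).Nonempty) ∧
  (∀ v : T.V, ∃! i, v ∈ P i) ∧
  (∀ i j, i ≠ j → ∀ u ∈ P i, ∀ v ∈ P j, (T.adj u v ↔ deltaDir i j))

/-- The induced subtournament on a set of vertices. -/
noncomputable def induce (T : Tournament) (S : Set T.V) : Tournament where
  V := ↥S
  fintypeV := (Set.toFinite S).fintype
  adj u v := T.adj u.1 v.1
  irrefl := fun v => T.irrefl v.1
  total := fun u v h => T.total u.1 v.1 (fun hh => h (Subtype.ext hh))
  asymm := fun u v h => T.asymm u.1 v.1 h

/-- `u` and `v` are joined by an edge of the backedge graph of the ordering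
given by the list `l`: the `T`-edge between them goes backwards in `l`. -/
def BackAdj (T : Tournament) (l : List T.V) (u v : T.V) : Prop :=
  (T.adj u v ∧ [v, u].Sublist l) ∨ (T.adj v u ∧ [u, v].Sublist l)

/-- The backedge graph `B_σ(T)` of the ordering `σ = l`. -/
def backGraph (T : Tournament) (l : List T.V) : SimpleGraph T.V where
  Adj u v := T.BackAdj l u v
  symm := by
    refine ⟨?_⟩
    intro u v h
    rcases h with ⟨h, s⟩ | ⟨h, s⟩
    · exact Or.inr ⟨h, s⟩
    · exact Or.inl ⟨h, s⟩
  loopless := by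
    refine ⟨?_⟩
    intro v h
    rcases h with ⟨h, _⟩ | ⟨h, _⟩ <;> exact T.irrefl v h

/-- Forest orderings: a one-element ordering is a forest ordering, and the
concatenation `l₁ ++ l₂` of two nonempty forest orderings is one provided no
two edges of the backedge graph going between `l₁` and `l₂` lie in the same
connected component of the backedge graph. -/
inductive IsForestOrdering (T : Tournament) : List T.V → Prop
  | single (v : T.V) : IsForestOrdering T [v]
  | split (l₁ l₂ : List T.V) (h₁ : l₁ ≠ []) (h₂ : l₂ ≠ [])
      (hsep : ∀ a ∈ l₁, ∀ b ∈ l₂, ∀ c ∈ l₁, ∀ d ∈ l₂,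
        T.BackAdj (l₁ ++ l₂) a b → T.BackAdj (l₁ ++ l₂) c d →
        Relation.ReflTransGen (T.BackAdj (l₁ ++ l₂)) a c → a = c ∧ b = d)
      (f₁ : IsForestOrdering T l₁) (f₂ : IsForestOrdering T l₂) :
      IsForestOrdering T (l₁ ++ l₂)

/-- A forest tournament: one admitting a forest ordering of its vertex set. -/
def IsForestTournament (T : Tournament) : Prop :=
  ∃ l : List T.V, l.Nodup ∧ (∀ v, v ∈ l) ∧ IsForestOrdering T l

/-- The set of ordered pairs realizing backedges between `l₁` and `l₂`. -/
def splitEdges (T : Tournament) (l l₁ l₂ : List T.V) : Set (T.V × T.V) :=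
  {p | p.1 ∈ l₁ ∧ p.2 ∈ l₂ ∧ T.BackAdj l p.1 p.2}

/-- The thickness of the backedge graph of `l`: the minimum number of backedges
crossing a split of `l` into two nonempty intervals. -/
noncomputable def thickness (T : Tournament) (l : List T.V) : ℕ :=
  sInf {k | ∃ l₁ l₂ : List T.V, l = l₁ ++ l₂ ∧ l₁ ≠ [] ∧ l₂ ≠ [] ∧
    k = (T.splitEdges l l₁ l₂).ncard}

/-- The "length" `|φ x - φ y|` of an unordered pair under `φ`. -/
def phiLen {α : Type} (φ : α → ℕ) : Sym2 α → ℕ :=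
  Sym2.lift ⟨fun u v => max (φ u) (φ v) - min (φ u) (φ v), fun u v => by
    show max (φ u) (φ v) - min (φ u) (φ v) = max (φ v) (φ u) - min (φ v) (φ u)
    rw [max_comm (φ u) (φ v), min_comm (φ u) (φ v)]⟩

/-- The backedge graph of the ordering `σ_φ` induced by `φ`. -/
def backGraphPhi (T : Tournament) (φ : T.V → ℕ) : SimpleGraph T.V where
  Adj u v := (T.adj u v ∧ φ v < φ u) ∨ (T.adj v u ∧ φ u < φ v)
  symm := by
    refine ⟨?_⟩
    intro u v h
    rcases h with h | h
    · exact Or.inr h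
    · exact Or.inl h
  loopless := by
    refine ⟨?_⟩
    intro v h
    rcases h with ⟨_, h⟩ | ⟨_, h⟩ <;> exact lt_irrefl _ h

/-- Two distinct edges `e`, `f` of `B_{σ_φ}(T)` are `(r,s)`-comparable under `φ`:
some path with at most `s` edges contains both, and `1/r ≤ φ(e)/φ(f) ≤ r`. -/
def Comparable (T : Tournament) (φ : T.V → ℕ) (r s : ℕ) (e f : Sym2 T.V) : Prop :=
  e ≠ f ∧
  (∃ (a b : T.V) (p : (T.backGraphPhi φ).Walk a b),
      p.IsPath ∧ p.length ≤ s ∧ e ∈ p.edges ∧ f ∈ p.edges) ∧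
  phiLen φ e ≤ r * phiLen φ f ∧ phiLen φ f ≤ r * phiLen φ e

/-- The class `𝒞_{(r,s)}`. -/
def classC (r s : ℕ) : Set Tournament :=
  {T | ∃ φ : T.V → ℕ, (∀ v, 0 < φ v) ∧ Function.Injective φ ∧
    ∀ e ∈ (T.backGraphPhi φ).edgeSet, ∀ f ∈ (T.backGraphPhi φ).edgeSet,
      ¬ Comparable T φ r s e f}

/-- `φ` is `r`-incomparable: it is an injective positive labelling such that any
two distinct edges of `B_{σ_φ}(T)` in the same connected component have length
ratio greater than `r` (or less than `1/r`). -/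
def RIncomp (T : Tournament) (φ : T.V → ℕ) (r : ℕ) : Prop :=
  (∀ v, 0 < φ v) ∧ Function.Injective φ ∧
  ∀ e ∈ (T.backGraphPhi φ).edgeSet, ∀ f ∈ (T.backGraphPhi φ).edgeSet, e ≠ f →
    (∃ a b, a ∈ e ∧ b ∈ f ∧ (T.backGraphPhi φ).Reachable a b) →
    (r * phiLen φ f < phiLen φ e ∨ r * phiLen φ e < phiLen φ f)

/-- `l` is an ordering of the vertex set of `T`. -/
def IsOrdering (T : Tournament) (l : List T.V) : Prop :=
  l.Nodup ∧ ∀ v, v ∈ l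

/-- The ordering `l` is incomparable: for every `r ≥ 1` there is an
`r`-incomparable `φ` with `σ_φ = l` (i.e. `φ` strictly increasing along `l`). -/
def IsIncompOrdering (T : Tournament) (l : List T.V) : Prop :=
  ∀ r : ℕ, 0 < r → ∃ φ : T.V → ℕ, RIncomp T φ r ∧ l.Pairwise (fun u v => φ u < φ v)

end Tournament

namespace Tournament

/-- Colorability with `k` transitive classes. -/
def Colorable' (T : Tournament) (k : ℕ) : Prop :=
  ∃ c : T.V → Fin k, ∀ i, T.IsTransSet {v | c v = i}

lemma chromNum_eq_of {T : Tournament} {n : ℕ} (h1 : Colorable' T n)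
    (h2 : ∀ k, Colorable' T k → n ≤ k) : T.chromNum = n := by
  have hne : n ∈ {k | ∃ c : T.V → Fin k, ∀ i, T.IsTransSet {v | c v = i}} := h1
  exact le_antisymm (Nat.sInf_le hne) (le_csInf ⟨n, hne⟩ fun k hk => h2 k hk)

lemma adj_mk_same {m : ℕ} (F : Fin m → Tournament) (j : Fin m) (u v : (F j).V) :
    (deltaSum F).adj ⟨j, u⟩ ⟨j, v⟩ ↔ (F j).adj u v := by
  constructor
  · rintro (h | ⟨i, p, q, hpq, h1, h2⟩)
    · exact absurd h (deltaDir_irrefl j)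
    · obtain ⟨rfl, hp⟩ := Sigma.mk.inj_iff.mp h1
      obtain ⟨-, hq⟩ := Sigma.mk.inj_iff.mp h2
      obtain rfl := eq_of_heq hp
      obtain rfl := eq_of_heq hq
      exact hpq
  · intro h
    exact Or.inr ⟨j, u, v, h, rfl, rfl⟩

lemma adj_mk_ne {m : ℕ} (F : Fin m → Tournament) {i j : Fin m} (h : i ≠ j)
    (u : (F i).V) (v : (F j).V) :
    (deltaSum F).adj ⟨i, u⟩ ⟨j, v⟩ ↔ deltaDir i j := by
  constructor
  · rintro (hd | ⟨l, p, q, hpq, h1, h2⟩)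
    · exact hd
    · exfalso
      obtain ⟨rfl, -⟩ := Sigma.mk.inj_iff.mp h1
      obtain ⟨rfl, -⟩ := Sigma.mk.inj_iff.mp h2
      exact h rfl
  · exact Or.inl

/-- If some color `i0` is avoided on an embedded copy of `B`, then `B` is
`(k-1)`-colorable. -/
lemma lower_aux {B T : Tournament} {k : ℕ} (c : T.V → Fin k)
    (hc : ∀ i, T.IsTransSet {v | c v = i}) (e : B.V → T.V)
    (he : ∀ u v, B.adj u v ↔ T.adj (e u) (e v)) (i0 : Fin k)
    (habs : ∀ u, c (e u) ≠ i0) : Colorable' B (k - 1) := by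
  have hval : ∀ u : B.V, (c (e u)).1 ≠ i0.1 := fun u h => habs u (Fin.ext h)
  refine ⟨fun u => ⟨if (c (e u)).1 < i0.1 then (c (e u)).1 else (c (e u)).1 - 1, by
      have h1 := (c (e u)).isLt
      have h2 := i0.isLt
      have h3 := hval u
      split <;> omega⟩, ?_⟩
  intro t a ha b hb d hd hab hbd
  simp only [Set.mem_setOf_eq] at ha hb hd
  have key : ∀ u v : B.V,
      (⟨if (c (e u)).1 < i0.1 then (c (e u)).1 else (c (e u)).1 - 1, by
        have h1 := (c (e u)).isLt; have h2 := i0.isLt; have h3 := hval u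
        split <;> omega⟩ : Fin (k-1)) =
      (⟨if (c (e v)).1 < i0.1 then (c (e v)).1 else (c (e v)).1 - 1, by
        have h1 := (c (e v)).isLt; have h2 := i0.isLt; have h3 := hval v
        split <;> omega⟩ : Fin (k-1)) → c (e u) = c (e v) := by
    intro u v h
    rw [Fin.mk.injEq] at h
    apply Fin.ext
    have h1 := (c (e u)).isLt
    have h2 := (c (e v)).isLt
    have h3 := hval u
    have h4 := hval v
    split at h <;> split at h <;> omega
  have hA : c (e a) = c (e b) := key a b (ha.trans hb.symm)
  have hB : c (e b) = c (e d) := key b d (hb.trans hd.symm)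
  exact (he a d).mpr (hc (c (e a)) (e a) rfl (e b) hA.symm (e d) (hA.trans hB).symm
    ((he a b).mp hab) ((he b d).mp hbd))

/-- The coloring of `Δ(I, B, B)` from a coloring of `B`, giving the apex a
fresh last color. -/
noncomputable def up {B : Tournament} {k : ℕ} (c : B.V → Fin k) :
    ((i : Fin 3) × ((![oneTour, B, B] : Fin 3 → Tournament) i).V) → Fin (k + 1) :=
  fun x => match x with
  | ⟨⟨0, _⟩, _⟩ => Fin.last k
  | ⟨⟨1, _⟩, u⟩ => (c u).castSucc
  | ⟨⟨2, _⟩, u⟩ => (c u).castSucc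

lemma upper {B : Tournament} {k : ℕ} (c : B.V → Fin k)
    (hc : ∀ i, B.IsTransSet {v | c v = i}) :
    Colorable' (deltaSum ![oneTour, B, B]) (k + 1) := by
  refine ⟨up c, ?_⟩
  intro i
  rcases Fin.eq_castSucc_or_eq_last i with ⟨t, rfl⟩ | rfl
  · -- class of `castSucc t`
    have claim : ∀ x : (deltaSum ![oneTour, B, B]).V, up c x = t.castSucc →
        ∃ w : B.V, c w = t ∧ (x = ⟨1, w⟩ ∨ x = ⟨2, w⟩) := by
      rintro ⟨⟨j, hj⟩, u⟩ hx
      interval_cases j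
      · exact absurd hx.symm (Fin.castSucc_lt_last t).ne
      · exact ⟨u, Fin.castSucc_inj.mp hx, Or.inl rfl⟩
      · exact ⟨u, Fin.castSucc_inj.mp hx, Or.inr rfl⟩
    intro a ha b hb d hd hab hbd
    obtain ⟨wa, hwa, ha'⟩ := claim a ha
    obtain ⟨wb, hwb, hb'⟩ := claim b hb
    obtain ⟨wd, hwd, hd'⟩ := claim d hd
    have h12 : deltaDir (1 : Fin 3) 2 := by unfold deltaDir; decide
    have h21 : ¬ deltaDir (2 : Fin 3) 1 := by unfold deltaDir; decide
    rcases ha' with rfl | rfl <;> rcases hb' with rfl | rfl <;> rcases hd' with rfl | rfl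
    · exact (adj_mk_same ![oneTour, B, B] 1 wa wd).mpr (hc t wa hwa wb hwb wd hwd
        ((adj_mk_same ![oneTour, B, B] 1 wa wb).mp hab) ((adj_mk_same ![oneTour, B, B] 1 wb wd).mp hbd))
    · exact (adj_mk_ne ![oneTour, B, B] (i := 1) (j := 2) (by decide) wa wd).mpr h12
    · exact absurd ((adj_mk_ne ![oneTour, B, B] (i := 2) (j := 1) (by decide) wb wd).mp hbd) h21
    · exact (adj_mk_ne ![oneTour, B, B] (i := 1) (j := 2) (by decide) wa wd).mpr h12
    · exact absurd ((adj_mk_ne ![oneTour, B, B] (i := 2) (j := 1) (by decide) wa wb).mp hab) h21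
    · exact absurd ((adj_mk_ne ![oneTour, B, B] (i := 2) (j := 1) (by decide) wa wb).mp hab) h21
    · exact absurd ((adj_mk_ne ![oneTour, B, B] (i := 2) (j := 1) (by decide) wb wd).mp hbd) h21
    · exact (adj_mk_same ![oneTour, B, B] 2 wa wd).mpr (hc t wa hwa wb hwb wd hwd
        ((adj_mk_same ![oneTour, B, B] 2 wa wb).mp hab) ((adj_mk_same ![oneTour, B, B] 2 wb wd).mp hbd))
  · -- class of the last color: only the apex
    have claim : ∀ x : (deltaSum ![oneTour, B, B]).V, up c x = Fin.last k →
        x = ⟨0, ()⟩ := by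
      rintro ⟨⟨j, hj⟩, u⟩ hx
      interval_cases j
      · rfl
      · exact absurd hx (Fin.castSucc_lt_last (c u)).ne
      · exact absurd hx (Fin.castSucc_lt_last (c u)).ne
    intro a ha b hb d hd hab hbd
    have : a = b := (claim a ha).trans (claim b hb).symm
    rw [this] at hab
    exact absurd hab ((deltaSum ![oneTour, B, B]).irrefl b)

lemma key_Dtour : ∀ m : ℕ, Colorable' (Dtour (m + 1)) (m + 1) ∧
    ∀ k, Colorable' (Dtour (m + 1)) k → m + 1 ≤ k := by
  intro m
  induction m with
  | zero =>
    constructor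
    · exact ⟨fun _ => 0, fun i a _ b _ d _ hab _ => hab.elim⟩
    · rintro k ⟨c, -⟩
      rcases k with - | k
      · exact (c ()).elim0
      · omega
  | succ m ih =>
    constructor
    · obtain ⟨c, hcol⟩ := ih.1
      exact upper c hcol
    · rintro k ⟨c, hc⟩
      have d01 : deltaDir (0 : Fin 3) 1 := by unfold deltaDir; decide
      have d12 : deltaDir (1 : Fin 3) 2 := by unfold deltaDir; decide
      have d20 : deltaDir (2 : Fin 3) 0 := by unfold deltaDir; decide
      set B := Dtour (m + 1) with hB
      set T := deltaSum ![oneTour, B, B] with hT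
      set x0 : T.V := ⟨0, ()⟩ with hx0
      have hc' : ∀ i : Fin k, T.IsTransSet {v | c v = i} := hc
      set i0 : Fin k := c x0 with hi0
      have hkpos : 0 < k := i0.pos
      by_cases h1 : ∀ u : B.V, c ⟨1, u⟩ ≠ i0
      · have hcol := lower_aux c hc' (fun u => ⟨1, u⟩)
          (fun u v => (adj_mk_same ![oneTour, B, B] 1 u v).symm) i0 h1
        have := ih.2 (k - 1) hcol
        omega
      · push_neg at h1
        obtain ⟨u1, hu1⟩ := h1
        have h2 : ∀ v : B.V, c ⟨2, v⟩ ≠ i0 := by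
          intro v hv
          have hxy : T.adj x0 ⟨1, u1⟩ := (adj_mk_ne ![oneTour, B, B] (by decide) _ _).mpr d01
          have hyz : T.adj (⟨1, u1⟩ : T.V) ⟨2, v⟩ := (adj_mk_ne ![oneTour, B, B] (by decide) _ _).mpr d12
          have hzx : T.adj (⟨2, v⟩ : T.V) x0 := (adj_mk_ne ![oneTour, B, B] (by decide) _ _).mpr d20
          have hxz := hc' i0 x0 hi0.symm ⟨1, u1⟩ hu1 ⟨2, v⟩ hv hxy hyz
          exact T.asymm _ _ hxz hzx
        have hcol := lower_aux c hc' (fun v => ⟨2, v⟩)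
          (fun u v => (adj_mk_same ![oneTour, B, B] 2 u v).symm) i0 h2
        have := ih.2 (k - 1) hcol
        omega

end Tournament

open Tournament in
/-- For every positive integer `n`, the chromatic number of the
tournament `D_n` equals `n`. -/
theorem chromNum_Dtour (n : ℕ) (hn : 1 ≤ n) : (Dtour n).chromNum = n := by
  obtain ⟨m, rfl⟩ : ∃ m, n = m + 1 := ⟨n - 1, by omega⟩
  exact chromNum_eq_of (key_Dtour m).1 (key_Dtour m).2
end

section
/- Let T be a forest tournament and σ a forest ordering of V(T). Then the backedge graph B_σ(T) contains no cycle as an induced subgraph; in particular, B_σ(T) is a forest. -/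
section Helpers

open SimpleGraph

namespace Tournament

lemma sublist_pair_left' {α : Type*} {l₁ l₂ : List α} {u v : α}
    (hd : ∀ a ∈ l₁, a ∉ l₂) (hv : v ∈ l₁) (h : [u, v].Sublist (l₁ ++ l₂)) :
    [u, v].Sublist l₁ := by
  rcases List.sublist_append_iff.mp h with ⟨r₁, r₂, heq, s₁, s₂⟩
  rcases r₁ with _ | ⟨a, _ | ⟨b, r⟩⟩
  · simp only [List.nil_append] at heq
    subst heq
    exact absurd (s₂.subset (by simp)) (hd v hv)
  · simp only [List.cons_append, List.nil_append, List.cons.injEq] at heq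
    obtain ⟨rfl, heq⟩ := heq
    subst heq
    exact absurd (s₂.subset (by simp)) (hd v hv)
  · simp only [List.cons_append, List.cons.injEq] at heq
    obtain ⟨rfl, rfl, heq⟩ := heq
    have : r = [] := by
      cases r with
      | nil => rfl
      | cons x xs => simp at heq
    subst this
    exact s₁

lemma sublist_pair_right' {α : Type*} {l₁ l₂ : List α} {u v : α}
    (hd : ∀ a ∈ l₁, a ∉ l₂) (hu : u ∈ l₂) (h : [u, v].Sublist (l₁ ++ l₂)) :
    [u, v].Sublist l₂ := by
  rcases List.sublist_append_iff.mp h with ⟨r₁, r₂, heq, s₁, s₂⟩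
  rcases r₁ with _ | ⟨a, _ | ⟨b, r⟩⟩
  · simp only [List.nil_append] at heq
    subst heq
    exact s₂
  · simp only [List.cons_append, List.nil_append, List.cons.injEq] at heq
    obtain ⟨rfl, heq⟩ := heq
    exact absurd hu (hd u (s₁.subset (by simp)))
  · simp only [List.cons_append, List.cons.injEq] at heq
    obtain ⟨rfl, rfl, heq⟩ := heq
    exact absurd hu (hd u (s₁.subset (by simp)))

lemma backAdj_mem {T : Tournament} {l : List T.V} {u v : T.V}
    (h : T.BackAdj l u v) : u ∈ l ∧ v ∈ l := by
  rcases h with ⟨_, s⟩ | ⟨_, s⟩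
  · exact ⟨s.subset (by simp), s.subset (by simp)⟩
  · exact ⟨s.subset (by simp), s.subset (by simp)⟩

lemma backAdj_symm {T : Tournament} {l : List T.V} {u v : T.V}
    (h : T.BackAdj l u v) : T.BackAdj l v u := by
  rcases h with ⟨h, s⟩ | ⟨h, s⟩
  · exact Or.inr ⟨h, s⟩
  · exact Or.inl ⟨h, s⟩

lemma backAdj_left {T : Tournament} {l₁ l₂ : List T.V} (hd : ∀ a ∈ l₁, a ∉ l₂)
    {u v : T.V} (hu : u ∈ l₁) (hv : v ∈ l₁) (h : T.BackAdj (l₁ ++ l₂) u v) :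
    T.BackAdj l₁ u v := by
  rcases h with ⟨ha, hs⟩ | ⟨ha, hs⟩
  · exact Or.inl ⟨ha, sublist_pair_left' hd hu hs⟩
  · exact Or.inr ⟨ha, sublist_pair_left' hd hv hs⟩

lemma backAdj_right {T : Tournament} {l₁ l₂ : List T.V} (hd : ∀ a ∈ l₁, a ∉ l₂)
    {u v : T.V} (hu : u ∈ l₂) (hv : v ∈ l₂) (h : T.BackAdj (l₁ ++ l₂) u v) :
    T.BackAdj l₂ u v := by
  rcases h with ⟨ha, hs⟩ | ⟨ha, hs⟩
  · exact Or.inl ⟨ha, sublist_pair_right' hd hv hs⟩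
  · exact Or.inr ⟨ha, sublist_pair_right' hd hu hs⟩

lemma walk_rtg {α : Type*} {G : SimpleGraph α} :
    ∀ {a b : α}, G.Walk a b → Relation.ReflTransGen G.Adj a b := by
  intro a b p
  induction p with
  | nil => exact Relation.ReflTransGen.refl
  | cons h _ ih => exact Relation.ReflTransGen.head h ih

/-- crossing predicate on edges given a Bool labelling of vertices -/
def crossB {α : Type*} (f : α → Bool) : Sym2 α → Bool :=
  Sym2.lift ⟨fun u v => xor (f u) (f v), fun u v => Bool.xor_comm _ _⟩

@[simp] lemma crossB_mk {α : Type*} (f : α → Bool) (u v : α) :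
    crossB f s(u, v) = xor (f u) (f v) := rfl

lemma walk_countP_parity {α : Type*} {G : SimpleGraph α} (f : α → Bool) :
    ∀ {a b : α} (p : G.Walk a b),
      (p.edges.countP (crossB f)) % 2 = if f a = f b then 0 else 1 := by
  intro a b p
  induction p with
  | nil => simp
  | @cons a x b h q ih =>
    rw [SimpleGraph.Walk.edges_cons, List.countP_cons]
    rcases Bool.eq_false_or_eq_true (f a) with hfa | hfa <;>
      rcases Bool.eq_false_or_eq_true (f x) with hfx | hfx <;>
      rcases Bool.eq_false_or_eq_true (f b) with hfb | hfb <;>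
      simp [crossB, hfa, hfx, hfb] at ih ⊢ <;> omega

lemma walk_support_side {α : Type*} {G : SimpleGraph α} (f : α → Bool) :
    ∀ {a b : α} (p : G.Walk a b), (∀ e ∈ p.edges, crossB f e = false) →
      ∀ x ∈ p.support, f x = f a := by
  intro a b p
  induction p with
  | nil =>
    intro _ x hx
    rw [SimpleGraph.Walk.support_nil] at hx
    simp at hx
    subst hx; rfl
  | @cons a y b h q ih =>
    intro hcr x hx
    have hay : f a = f y := by
      have h1 := hcr s(a, y) (by simp)
      rw [crossB_mk] at h1
      rcases Bool.eq_false_or_eq_true (f a) with hfa | hfa <;>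
        rcases Bool.eq_false_or_eq_true (f y) with hfy | hfy <;>
        simp [hfa, hfy] at h1 ⊢
    rw [SimpleGraph.Walk.support_cons] at hx
    rcases List.mem_cons.mp hx with rfl | hx
    · rfl
    · rw [ih (fun e he => hcr e (by simp [he])) x hx, hay]

lemma walk_support_mem {α : Type*} {G : SimpleGraph α} {P : α → Prop}
    (hadj : ∀ u v, G.Adj u v → P v) :
    ∀ {a b : α} (p : G.Walk a b), P a → ∀ x ∈ p.support, P x := by
  intro a b p
  induction p with
  | nil =>
    intro ha x hx
    rw [SimpleGraph.Walk.support_nil] at hx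
    simp at hx
    subst hx; exact ha
  | @cons a y b h q ih =>
    intro ha x hx
    rw [SimpleGraph.Walk.support_cons] at hx
    rcases List.mem_cons.mp hx with rfl | hx
    · exact ha
    · exact ih (hadj a y h) x hx

lemma edge_rep {α : Type*} {G : SimpleGraph α} {a b : α} {c : G.Walk a b}
    (e : Sym2 α) (he : e ∈ c.edges) :
    ∃ u v, e = s(u, v) ∧ G.Adj u v ∧ u ∈ c.support ∧ v ∈ c.support := by
  induction e using Sym2.ind with
  | _ u v =>
    exact ⟨u, v, rfl, c.adj_of_mem_edges he,
      SimpleGraph.Walk.fst_mem_support_of_mem_edges c he,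
      SimpleGraph.Walk.snd_mem_support_of_mem_edges c he⟩

theorem isAcyclic_backGraph {T : Tournament} :
    ∀ {l : List T.V}, IsForestOrdering T l → l.Nodup → (T.backGraph l).IsAcyclic := by
  intro l hfo
  induction hfo with
  | single v =>
    intro _ w c hc
    cases c with
    | nil => exact hc.ne_nil rfl
    | cons h q =>
      rcases h with ⟨_, hs⟩ | ⟨_, hs⟩ <;> simpa using hs.length_le
  | split l₁ l₂ h₁ h₂ hsep f₁ f₂ ih₁ ih₂ =>
    intro hnd
    classical
    rw [List.nodup_append] at hnd
    obtain ⟨hn₁, hn₂, hd⟩ := hnd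
    have hd' : ∀ a ∈ l₁, a ∉ l₂ := fun a ha hb => hd a ha a hb rfl
    obtain ⟨f, hfiff⟩ : ∃ f : T.V → Bool, ∀ v, f v = true ↔ v ∈ l₁ :=
      ⟨fun v => decide (v ∈ l₁), fun v => by simp⟩
    intro w c hc
    have hGadj : ∀ u v : T.V, (T.backGraph (l₁ ++ l₂)).Adj u v →
        T.BackAdj (l₁ ++ l₂) u v := fun _ _ h => h
    by_cases hcr : ∃ e ∈ c.edges, crossB f e = true
    · obtain ⟨e, heC, hce⟩ := hcr
      have h1 : 0 < c.edges.countP (crossB f) := List.countP_pos_iff.mpr ⟨e, heC, hce⟩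
      have hpar : c.edges.countP (crossB f) % 2 = 0 := by
        rw [walk_countP_parity f c, if_pos rfl]
      have h2 : 2 ≤ c.edges.countP (crossB f) := by omega
      have hnde : (c.edges.filter (crossB f)).Nodup :=
        hc.isTrail.edges_nodup.filter _
      rw [List.countP_eq_length_filter] at h2
      obtain ⟨e₁, e₂, he₁, he₂, hne⟩ : ∃ e₁ e₂, e₁ ∈ c.edges.filter (crossB f) ∧
          e₂ ∈ c.edges.filter (crossB f) ∧ e₁ ≠ e₂ := by
        rcases hl : c.edges.filter (crossB f) with _ | ⟨x, _ | ⟨y, r⟩⟩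
        · rw [hl] at h2; simp at h2
        · rw [hl] at h2; simp at h2
        · rw [hl] at hnde
          refine ⟨x, y, by simp, by simp, ?_⟩
          simp only [List.nodup_cons, List.mem_cons] at hnde
          exact fun hxy => hnde.1 (Or.inl hxy)
      rw [List.mem_filter] at he₁ he₂
      obtain ⟨u₁, v₁, rfl, hadj₁, hs₁u, hs₁v⟩ := edge_rep e₁ he₁.1
      obtain ⟨u₂, v₂, rfl, hadj₂, hs₂u, hs₂v⟩ := edge_rep e₂ he₂.1
      have horient : ∀ u v : T.V, (T.backGraph (l₁ ++ l₂)).Adj u v → crossB f s(u, v) = true →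
          (u ∈ l₁ ∧ v ∈ l₂) ∨ (v ∈ l₁ ∧ u ∈ l₂) := by
        intro u v hadj hcruv
        have hm := backAdj_mem (hGadj u v hadj)
        have hm₁ := List.mem_append.mp hm.1
        have hm₂ := List.mem_append.mp hm.2
        rw [crossB_mk] at hcruv
        by_cases hu : u ∈ l₁
        · refine Or.inl ⟨hu, ?_⟩
          have hv : v ∉ l₁ := by
            intro hv
            rw [(hfiff u).mpr hu, (hfiff v).mpr hv] at hcruv
            simp at hcruv
          exact hm₂.resolve_left hv
        · right
          have hvv : v ∈ l₁ := by
            rcases Bool.eq_false_or_eq_true (f v) with hfv | hfv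
            · exact (hfiff v).mp hfv
            · exfalso
              have hfu : f u = false := by
                rcases Bool.eq_false_or_eq_true (f u) with h' | h'
                · exact absurd ((hfiff u).mp h') hu
                · exact h'
              rw [hfu, hfv] at hcruv
              simp at hcruv
          exact ⟨hvv, hm₁.resolve_left hu⟩
      have hpick : ∀ u v : T.V, (T.backGraph (l₁ ++ l₂)).Adj u v → crossB f s(u, v) = true →
          u ∈ c.support → v ∈ c.support →
          ∃ a b, a ∈ l₁ ∧ b ∈ l₂ ∧ s(u, v) = s(a, b) ∧
            T.BackAdj (l₁ ++ l₂) a b ∧ a ∈ c.support := by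
        intro u v hadj hcruv hsu hsv
        rcases horient u v hadj hcruv with ⟨hu, hv⟩ | ⟨hv, hu⟩
        · exact ⟨u, v, hu, hv, rfl, hGadj u v hadj, hsu⟩
        · exact ⟨v, u, hv, hu, Sym2.eq_swap, backAdj_symm (hGadj u v hadj), hsv⟩
      obtain ⟨a₁, b₁, ha₁, hb₁, heq₁, hba₁, hsup₁⟩ := hpick u₁ v₁ hadj₁ he₁.2 hs₁u hs₁v
      obtain ⟨a₂, b₂, ha₂, hb₂, heq₂, hba₂, hsup₂⟩ := hpick u₂ v₂ hadj₂ he₂.2 hs₂u hs₂v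
      have hreach : Relation.ReflTransGen (T.BackAdj (l₁ ++ l₂)) a₁ a₂ := by
        have w₁ := (c.takeUntil a₁ hsup₁).reverse.append (c.takeUntil a₂ hsup₂)
        exact walk_rtg (G := T.backGraph (l₁ ++ l₂)) w₁
      obtain ⟨hac, hbd⟩ := hsep a₁ ha₁ b₁ hb₁ a₂ ha₂ b₂ hb₂ hba₁ hba₂ hreach
      exact hne (by rw [heq₁, heq₂, hac, hbd])
    · push_neg at hcr
      have hcr' : ∀ e ∈ c.edges, crossB f e = false := by
        intro e he
        have := hcr e he
        exact Bool.eq_false_iff.mpr this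
      have hw : w ∈ l₁ ++ l₂ := by
        obtain ⟨y, hadj0, q0, -⟩ := SimpleGraph.Walk.not_nil_iff.mp hc.not_nil
        exact (backAdj_mem (hGadj _ _ hadj0)).1
      have hside : ∀ x ∈ c.support, f x = f w := walk_support_side f c hcr'
      rcases List.mem_append.mp hw with hw₁ | hw₂
      · have hsub : ∀ x ∈ c.support, x ∈ l₁ := by
          intro x hx
          exact (hfiff x).mp (by rw [hside x hx]; exact (hfiff w).mpr hw₁)
        have hedges : ∀ e ∈ c.edges, e ∈ (T.backGraph l₁).edgeSet := by
          intro e he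
          obtain ⟨u, v, rfl, hadj, hsu, hsv⟩ := edge_rep e he
          exact backAdj_left hd' (hsub u hsu) (hsub v hsv) (hGadj u v hadj)
        exact ih₁ hn₁ (c.transfer _ hedges) (hc.transfer hedges)
      · have hsub : ∀ x ∈ c.support, x ∈ l₂ := by
          intro x hx
          have hfx : f x = false := by
            rw [hside x hx]
            rcases Bool.eq_false_or_eq_true (f w) with h' | h'
            · exact absurd hw₂ (hd' w ((hfiff w).mp h'))
            · exact h'
          have hxl : x ∈ l₁ ++ l₂ :=
            walk_support_mem (fun u v h => (backAdj_mem (hGadj u v h)).2) c hw x hx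
          rcases List.mem_append.mp hxl with hx₁ | hx₂
          · exact absurd ((hfiff x).mpr hx₁) (by rw [hfx]; simp)
          · exact hx₂
        have hedges : ∀ e ∈ c.edges, e ∈ (T.backGraph l₂).edgeSet := by
          intro e he
          obtain ⟨u, v, rfl, hadj, hsu, hsv⟩ := edge_rep e he
          exact backAdj_right hd' (hsub u hsu) (hsub v hsv) (hGadj u v hadj)
        exact ih₂ hn₂ (c.transfer _ hedges) (hc.transfer hedges)

end Tournament

end Helpers

open Tournament in
/-- The backedge graph of a forest ordering of a forest tournament
contains no cycle as an induced subgraph; in particular it is a forest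
(acyclic). -/
theorem backGraph_no_induced_cycle (T : Tournament) (l : List T.V)
    (hnd : l.Nodup) (hcov : ∀ v, v ∈ l) (hfo : IsForestOrdering T l) :
    (∀ n : ℕ, 3 ≤ n → ∀ S : Set T.V,
        IsEmpty ((T.backGraph l).induce S ≃g SimpleGraph.cycleGraph n)) ∧
      (T.backGraph l).IsAcyclic := by
  have hac : (T.backGraph l).IsAcyclic := Tournament.isAcyclic_backGraph hfo hnd
  refine ⟨?_, hac⟩
  intro n hn S
  constructor
  intro iso
  obtain ⟨m, rfl⟩ : ∃ m, n = m + 3 := ⟨n - 3, by omega⟩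
  have hacS : ((T.backGraph l).induce S).IsAcyclic := by
    intro v c hcyc
    exact hac (c.map (SimpleGraph.Embedding.induce (G := T.backGraph l) S).toHom)
      (hcyc.map (SimpleGraph.Embedding.induce (G := T.backGraph l) S).injective)
  have hacC : (SimpleGraph.cycleGraph (m + 3)).IsAcyclic := by
    intro v c hcyc
    exact hacS (c.map iso.symm.toHom) (hcyc.map iso.symm.injective)
  have htree : (SimpleGraph.cycleGraph (m + 3)).IsTree :=
    ⟨SimpleGraph.cycleGraph_connected, hacC⟩
  have hcard := htree.card_edgeFinset
  have hsum := SimpleGraph.sum_degrees_eq_twice_card_edges (SimpleGraph.cycleGraph (m + 3))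
  simp only [SimpleGraph.cycleGraph_degree_three_le, Finset.sum_const, Finset.card_univ,
    Fintype.card_fin, smul_eq_mul] at hsum
  simp only [Fintype.card_fin] at hcard
  omega
end
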